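/- Suppose x ∈ ℝⁿ satisfies F(x) ≤ 0 entrywise, 0 ≤ x entrywise, and eᵀx ≤ 1, and let z ∈ ℝⁿ satisfy 0 ≤ z ≤ x entrywise. Let y = x − (F'_z)⁻¹F(x). Then F(y) = −αR((x − z) ⊗ (y − x) + (y − x) ⊗ (x − z)) − αR((y − x) ⊗ (y − x)); in particular F(y) ≤ 0 entrywise. -/

import Mathlib

open Matrix BigOperators Finset Filter

noncomputable section

/-- Kronecker product of two vectors: `(u ⊗ w)_{(i,j)} = u_i w_j`. -/
def kron {n : ℕ} (u w : Fin n → ℝ) : Fin n × Fin n → ℝ := fun p => u p.1 * w p.2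

/-- `u ⊗ I` : the `n² × n` Kronecker product of a vector with the identity,
so that `(u ⊗ I) w = u ⊗ w`. -/
def kronVecId {n : ℕ} (u : Fin n → ℝ) : Matrix (Fin n × Fin n) (Fin n) ℝ :=
  Matrix.of fun p k => u p.1 * (if p.2 = k then (1 : ℝ) else 0)

/-- `I ⊗ u` : the `n² × n` Kronecker product of the identity with a vector,
so that `(I ⊗ u) w = w ⊗ u`. -/
def idKronVec {n : ℕ} (u : Fin n → ℝ) : Matrix (Fin n × Fin n) (Fin n) ℝ :=
  Matrix.of fun p k => (if p.1 = k then (1 : ℝ) else 0) * u p.2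

/-- `F(x) = x − α R (x ⊗ x) − (1 − α) v`. -/
def Fmap {n : ℕ} (α : ℝ) (R : Matrix (Fin n) (Fin n × Fin n) ℝ) (v : Fin n → ℝ)
    (x : Fin n → ℝ) : Fin n → ℝ :=
  x - α • R.mulVec (kron x x) - (1 - α) • v

/-- `F'ₓ = I − α R (x ⊗ I + I ⊗ x)`. -/
def Fprime {n : ℕ} (α : ℝ) (R : Matrix (Fin n) (Fin n × Fin n) ℝ)
    (x : Fin n → ℝ) : Matrix (Fin n) (Fin n) ℝ :=
  1 - α • (R * (kronVecId x + idKronVec x))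

attribute [local instance] Matrix.linftyOpNormedAddCommGroup Matrix.linftyOpNormedSpace
  Matrix.linftyOpNormedRing Matrix.linftyOpNormedAlgebra Matrix.linftyOpIsBoundedSMul

namespace Stmt10Aux

variable {n : ℕ}

lemma pow_entry_nonneg (t : Matrix (Fin n) (Fin n) ℝ) (ht : ∀ i j, 0 ≤ t i j) (k : ℕ) :
    ∀ i j, 0 ≤ (t ^ k) i j := by
  induction k with
  | zero => intro i j; simp [Matrix.one_apply]; positivity
  | succ m ih =>
    intro i j
    rw [pow_succ, Matrix.mul_apply]
    exact Finset.sum_nonneg fun c _ => mul_nonneg (ih i c) (ht c j)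

/-- If `t` has nonnegative entries and row sums `< 1`, then `1 - t` is invertible
with nonnegative inverse. -/
lemma oneSub_inv_nonneg (t : Matrix (Fin n) (Fin n) ℝ) (ht : ∀ i j, 0 ≤ t i j)
    (hrow : ∀ i, ∑ j, t i j < 1) :
    IsUnit (1 - t) ∧ ∀ i j, 0 ≤ (1 - t)⁻¹ i j := by
  have hnorm : ‖t‖ < 1 := by
    rw [Matrix.linfty_opNorm_def]
    have : ((Finset.univ : Finset (Fin n)).sup fun i => ∑ j, ‖t i j‖₊) < 1 := by
      rw [Finset.sup_lt_iff (by norm_num)]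
      intro i _
      have : ((∑ j, ‖t i j‖₊ : NNReal) : ℝ) < 1 := by
        push_cast
        calc (∑ j, (‖t i j‖₊ : ℝ)) = ∑ j, t i j := by
              refine Finset.sum_congr rfl fun j _ => ?_
              simp [Real.nnnorm_of_nonneg (ht i j)]
          _ < 1 := hrow i
      exact_mod_cast this
    exact_mod_cast this
  have hu : IsUnit (1 - t) := ⟨Units.oneSub t hnorm, rfl⟩
  refine ⟨hu, fun i j => ?_⟩
  have hinv : (1 - t)⁻¹ = ∑' k : ℕ, t ^ k := by
    rw [Matrix.nonsing_inv_eq_ringInverse]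
    have h1 := Ring.inverse_unit (Units.oneSub t hnorm)
    exact h1.trans rfl
  rw [hinv]
  classical
  have hsum : Summable fun k : ℕ => t ^ k := summable_geometric_of_norm_lt_one hnorm
  let f : Matrix (Fin n) (Fin n) ℝ →ₗ[ℝ] ℝ :=
    { toFun := fun A => A i j, map_add' := fun a b => rfl, map_smul' := fun c a => rfl }
  have hf : Continuous f := f.continuous_of_finiteDimensional
  have : (∑' k : ℕ, t ^ k) i j = ∑' k : ℕ, (t ^ k) i j :=
    (hsum.hasSum.map f hf).tsum_eq.symm
  rw [this]
  exact tsum_nonneg fun k => pow_entry_nonneg t ht k i j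

lemma kronVecId_mulVec (u w : Fin n → ℝ) : (kronVecId u).mulVec w = kron u w := by
  funext p
  simp [kronVecId, Matrix.mulVec, dotProduct, kron, ite_mul, mul_assoc]

lemma idKronVec_mulVec (u w : Fin n → ℝ) : (idKronVec u).mulVec w = kron w u := by
  funext p
  simp [idKronVec, Matrix.mulVec, dotProduct, kron, ite_mul, mul_comm]

lemma mulVec_nonneg {m k : Type*} [Fintype k] (A : Matrix m k ℝ) (hA : ∀ i j, 0 ≤ A i j)
    (w : k → ℝ) (hw : 0 ≤ w) : 0 ≤ A.mulVec w := by
  intro i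
  exact Finset.sum_nonneg fun j _ => mul_nonneg (hA i j) (hw j)

end Stmt10Aux

open Stmt10Aux

theorem stmt10 {n : ℕ} (hn : 1 ≤ n) (α : ℝ) (hα0 : 0 < α) (hα : α < 1 / 2)
    (R : Matrix (Fin n) (Fin n × Fin n) ℝ) (hR0 : ∀ i p, 0 ≤ R i p)
    (hRcol : ∀ p, ∑ i, R i p = 1)
    (v : Fin n → ℝ) (hv0 : 0 ≤ v) (hv1 : ∑ i, v i = 1)
    (x : Fin n → ℝ) (hFx : Fmap α R v x ≤ 0) (hx0 : 0 ≤ x) (hx1 : ∑ i, x i ≤ 1)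
    (z : Fin n → ℝ) (hz0 : 0 ≤ z) (hzx : z ≤ x)
    (y : Fin n → ℝ) (hy : y = x - (Fprime α R z)⁻¹.mulVec (Fmap α R v x)) :
    Fmap α R v y =
      -(α • R.mulVec (kron (x - z) (y - x) + kron (y - x) (x - z)))
        - α • R.mulVec (kron (y - x) (y - x)) ∧
    Fmap α R v y ≤ 0 := by
  classical
  set K : Matrix (Fin n × Fin n) (Fin n) ℝ := kronVecId z + idKronVec z with hK
  set t : Matrix (Fin n) (Fin n) ℝ := α • (R * K) with ht
  have hFp : Fprime α R z = 1 - t := rfl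
  have hKnn : ∀ p j, 0 ≤ K p j := by
    intro p j
    simp only [hK, Matrix.add_apply, kronVecId, idKronVec, Matrix.of_apply]
    have h1 : (0:ℝ) ≤ (if p.2 = j then (1:ℝ) else 0) := by split_ifs <;> norm_num
    have h2 : (0:ℝ) ≤ (if p.1 = j then (1:ℝ) else 0) := by split_ifs <;> norm_num
    exact add_nonneg (mul_nonneg (hz0 p.1) h1) (mul_nonneg h2 (hz0 p.2))
  have htnn : ∀ i j, 0 ≤ t i j := by
    intro i j
    simp only [ht, Matrix.smul_apply, Matrix.mul_apply, smul_eq_mul]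
    exact mul_nonneg hα0.le
      (Finset.sum_nonneg fun p _ => mul_nonneg (hR0 i p) (hKnn p j))
  have hsz : ∑ i, z i ≤ 1 :=
    le_trans (Finset.sum_le_sum fun i _ => hzx i) hx1
  have hsz0 : 0 ≤ ∑ i, z i := Finset.sum_nonneg fun i _ => hz0 i
  have hcol : ∀ j, ∑ i, t i j < 1 := by
    intro j
    have hKcol : ∑ p : Fin n × Fin n, K p j = 2 * ∑ i, z i := by
      simp only [hK, Matrix.add_apply, kronVecId, idKronVec, Matrix.of_apply]
      rw [Fintype.sum_prod_type]
      simp [Finset.sum_add_distrib, mul_ite, ite_mul, two_mul]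
    have : ∑ i, t i j = α * (2 * ∑ i, z i) := by
      simp only [ht, Matrix.smul_apply, Matrix.mul_apply, smul_eq_mul]
      rw [← Finset.mul_sum, Finset.sum_comm]
      congr 1
      rw [← hKcol]
      refine Finset.sum_congr rfl fun p _ => ?_
      rw [← Finset.sum_mul, hRcol p, one_mul]
    rw [this]
    nlinarith
  have hTt : (1 - t)ᵀ = 1 - tᵀ := by
    rw [Matrix.transpose_sub, Matrix.transpose_one]
  obtain ⟨huT, hinvT⟩ := oneSub_inv_nonneg tᵀ (fun i j => htnn j i) (fun i => hcol i)
  have hdet : IsUnit (Fprime α R z).det := by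
    rw [hFp, ← Matrix.det_transpose, hTt]
    exact (Matrix.isUnit_iff_isUnit_det _).mp huT
  have hinvnn : ∀ i j, 0 ≤ (Fprime α R z)⁻¹ i j := by
    intro i j
    have h1 : (Fprime α R z)⁻¹ i j = ((Fprime α R z)ᵀ)⁻¹ j i := by
      rw [← Matrix.transpose_nonsing_inv]; rfl
    rw [h1, hFp, hTt]
    exact hinvT j i
  -- basic facts about d = y - x
  set d : Fin n → ℝ := y - x with hdd
  have hdval0 : d = (Fprime α R z)⁻¹.mulVec (-(Fmap α R v x)) := by
    rw [hdd, hy, Matrix.mulVec_neg]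
    abel
  have hd0 : 0 ≤ d := by
    rw [hdval0]
    exact mulVec_nonneg _ hinvnn _ (fun i => by simpa using hFx i)
  have hAd : (Fprime α R z).mulVec d = -(Fmap α R v x) := by
    rw [hdval0, Matrix.mulVec_mulVec, Matrix.mul_nonsing_inv _ hdet, Matrix.one_mulVec]
  have hAd' : (Fprime α R z).mulVec d = d - α • R.mulVec (kron z d + kron d z) := by
    rw [hFp, Matrix.sub_mulVec, Matrix.one_mulVec, Matrix.smul_mulVec,
      ← Matrix.mulVec_mulVec, hK, Matrix.add_mulVec, kronVecId_mulVec, idKronVec_mulVec]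
  have hdval : d = -(Fmap α R v x) + α • R.mulVec (kron z d + kron d z) := by
    have h := hAd'.symm.trans hAd
    rw [sub_eq_iff_eq_add] at h
    exact h
  -- kron decomposition
  have hky : kron y y = kron x x + (kron x d + kron d x + kron d d) := by
    funext p
    simp only [kron, hdd, Pi.add_apply, Pi.sub_apply]
    ring
  have hsplit : kron (x - z) d + kron d (x - z)
      = (kron x d + kron d x) - (kron z d + kron d z) := by
    funext p
    simp only [kron, Pi.add_apply, Pi.sub_apply]
    ring
  have hy' : y = x + d := by rw [hdd]; abel
  have expand : Fmap α R v y
      = Fmap α R v x + d - α • R.mulVec (kron x d + kron d x) - α • R.mulVec (kron d d) := by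
    unfold Fmap
    rw [hky, Matrix.mulVec_add, Matrix.mulVec_add, hy']
    simp only [smul_add]
    abel
  have final : Fmap α R v y
      = -(α • R.mulVec (kron (x - z) d + kron d (x - z))) - α • R.mulVec (kron d d) := by
    rw [expand, hsplit, Matrix.mulVec_sub]
    nth_rewrite 1 [hdval]
    simp only [smul_sub]
    abel
  refine ⟨final, ?_⟩
  have hxz : 0 ≤ x - z := fun i => by simpa [sub_nonneg] using hzx i
  have k1 : 0 ≤ kron (x - z) d + kron d (x - z) := by
    intro p
    exact add_nonneg (mul_nonneg (hxz p.1) (hd0 p.2)) (mul_nonneg (hd0 p.1) (hxz p.2))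
  have k2 : 0 ≤ kron d d := fun p => mul_nonneg (hd0 p.1) (hd0 p.2)
  have m1 := mulVec_nonneg R hR0 _ k1
  have m2 := mulVec_nonneg R hR0 _ k2
  intro i
  rw [final]
  simp only [Pi.sub_apply, Pi.neg_apply, Pi.smul_apply, smul_eq_mul, Pi.zero_apply]
  have := m1 i
  have := m2 i
  simp only [Pi.zero_apply] at *
  nlinarith
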